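/- Let W be an integrable real-valued random variable and let α ∈ (0,1). A point c* ∈ ℝ maximizes the function h(c) = c + (1/α)·E[min(W − c, 0)] over ℝ if and only if P(W < c*) ≤ α ≤ P(W ≤ c*), i.e. the set of maximizers of h is exactly the set of α-quantiles of W. -/

import Mathlib

open MeasureTheory ProbabilityTheory

private lemma ru_scale {α x y u v : ℝ} (hα : 0 < α)
    (h : x + 1 / α * u ≤ y + 1 / α * v) : u - v ≤ α * (y - x) := by
  have h' := mul_le_mul_of_nonneg_left h hα.le
  have hx : α * (x + 1 / α * u) = α * x + u := by field_simp
  have hy : α * (y + 1 / α * v) = α * y + v := by field_simp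
  rw [hx, hy] at h'
  nlinarith [h']

private lemma ru_scale' {α x y u v : ℝ} (hα : 0 < α)
    (h : u - v ≤ α * (y - x)) : x + 1 / α * u ≤ y + 1 / α * v := by
  have h' := mul_le_mul_of_nonneg_left h (inv_nonneg.2 hα.le)
  have he : α⁻¹ * (α * (y - x)) = y - x := by field_simp
  rw [he] at h'
  have e1 : 1 / α * u - 1 / α * v = α⁻¹ * (u - v) := by rw [one_div]; ring
  linarith

private lemma ru_int {Ω : Type*} [MeasureSpace Ω] [IsProbabilityMeasure (ℙ : Measure Ω)]
    {W : Ω → ℝ} (hW : Integrable W) (c : ℝ) :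
    Integrable (fun ω => min (W ω - c) 0) := by
  have h1 : Integrable (fun ω => W ω - c) := hW.sub (integrable_const c)
  refine h1.mono (h1.aestronglyMeasurable.inf aestronglyMeasurable_const) ?_
  filter_upwards with ω
  simp only [Real.norm_eq_abs]
  refine abs_le.2 ⟨le_min (neg_abs_le _) (neg_nonpos.2 (abs_nonneg _)), ?_⟩
  exact (min_le_right _ _).trans (abs_nonneg _)

/-- Key bound A: for `a ≤ b`,
`∫ min(W-b,0) ≤ ∫ min(W-a,0) + (a-b)·P(W ≤ a)`. -/
private lemma ru_keyA {Ω : Type*} [MeasureSpace Ω] [IsProbabilityMeasure (ℙ : Measure Ω)]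
    {W : Ω → ℝ} (hW : Integrable W) (hm : Measurable W) {a b : ℝ} (hab : a ≤ b) :
    ∫ ω, min (W ω - b) 0 ≤
      (∫ ω, min (W ω - a) 0) + (a - b) * (ℙ {ω | W ω ≤ a}).toReal := by
  have hsA : MeasurableSet {ω | W ω ≤ a} := measurableSet_le hm measurable_const
  have hind : Integrable ({ω | W ω ≤ a}.indicator fun _ => (a - b)) :=
    (integrable_const _).indicator hsA
  have hpt : ∀ ω, min (W ω - b) 0 ≤
      min (W ω - a) 0 + {ω | W ω ≤ a}.indicator (fun _ => (a - b)) ω := by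
    intro ω
    simp only [Set.indicator_apply, Set.mem_setOf_eq]
    by_cases hω : W ω ≤ a
    · rw [if_pos hω]
      have h1 : min (W ω - b) 0 = W ω - b := min_eq_left (by linarith)
      have h2 : min (W ω - a) 0 = W ω - a := min_eq_left (by linarith)
      rw [h1, h2]
      linarith
    · rw [if_neg hω, add_zero]
      exact min_le_min (by linarith) le_rfl
  calc ∫ ω, min (W ω - b) 0
      ≤ ∫ ω, (min (W ω - a) 0 + {ω | W ω ≤ a}.indicator (fun _ => (a - b)) ω) :=
        integral_mono (ru_int hW b) ((ru_int hW a).add hind) hpt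
    _ = (∫ ω, min (W ω - a) 0) + ∫ ω, {ω | W ω ≤ a}.indicator (fun _ => (a - b)) ω :=
        integral_add (ru_int hW a) hind
    _ = (∫ ω, min (W ω - a) 0) + (a - b) * (ℙ {ω | W ω ≤ a}).toReal := by
        rw [integral_indicator_const _ hsA, smul_eq_mul, mul_comm, measureReal_def]

/-- Key bound B: for `a ≤ b`,
`∫ min(W-a,0) ≤ ∫ min(W-b,0) + (b-a)·P(W < b)`. -/
private lemma ru_keyB {Ω : Type*} [MeasureSpace Ω] [IsProbabilityMeasure (ℙ : Measure Ω)]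
    {W : Ω → ℝ} (hW : Integrable W) (hm : Measurable W) {a b : ℝ} (hab : a ≤ b) :
    ∫ ω, min (W ω - a) 0 ≤
      (∫ ω, min (W ω - b) 0) + (b - a) * (ℙ {ω | W ω < b}).toReal := by
  have hsB : MeasurableSet {ω | W ω < b} := measurableSet_lt hm measurable_const
  have hind : Integrable ({ω | W ω < b}.indicator fun _ => (b - a)) :=
    (integrable_const _).indicator hsB
  have hpt : ∀ ω, min (W ω - a) 0 ≤
      min (W ω - b) 0 + {ω | W ω < b}.indicator (fun _ => (b - a)) ω := by
    intro ω
    simp only [Set.indicator_apply, Set.mem_setOf_eq]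
    by_cases hω : W ω < b
    · rw [if_pos hω]
      have h1 : min (W ω - b) 0 = W ω - b := min_eq_left (by linarith)
      rw [h1]
      have := min_le_left (W ω - a) (0 : ℝ)
      linarith
    · rw [if_neg hω, add_zero]
      push_neg at hω
      have h1 : min (W ω - b) 0 = 0 := min_eq_right (by linarith)
      rw [h1]
      exact min_le_right _ _
  calc ∫ ω, min (W ω - a) 0
      ≤ ∫ ω, (min (W ω - b) 0 + {ω | W ω < b}.indicator (fun _ => (b - a)) ω) :=
        integral_mono (ru_int hW a) ((ru_int hW b).add hind) hpt
    _ = (∫ ω, min (W ω - b) 0) + ∫ ω, {ω | W ω < b}.indicator (fun _ => (b - a)) ω :=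
        integral_add (ru_int hW b) hind
    _ = (∫ ω, min (W ω - b) 0) + (b - a) * (ℙ {ω | W ω < b}).toReal := by
        rw [integral_indicator_const _ hsB, smul_eq_mul, mul_comm, measureReal_def]

private lemma ru_aux {Ω : Type*} [MeasureSpace Ω] [IsProbabilityMeasure (ℙ : Measure Ω)]
    {W : Ω → ℝ} (hW : Integrable W) (hm : Measurable W) {α : ℝ}
    (hα : α ∈ Set.Ioo (0 : ℝ) 1) (cstar : ℝ) :
    (∀ c : ℝ,
        c + (1 / α) * ∫ ω, min (W ω - c) 0 ≤
          cstar + (1 / α) * ∫ ω, min (W ω - cstar) 0) ↔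
      ((ℙ {ω | W ω < cstar}).toReal ≤ α ∧ α ≤ (ℙ {ω | W ω ≤ cstar}).toReal) := by
  obtain ⟨hα0, hα1⟩ := hα
  have hfin : ∀ s : Set Ω, ℙ s ≠ ⊤ := fun s => measure_ne_top _ s
  constructor
  · intro hmax
    constructor
    · -- P(W < cstar) ≤ α
      have hle : ∀ a : ℝ, a < cstar → (ℙ {ω | W ω ≤ a}).toReal ≤ α := by
        intro a ha
        have h2 := ru_scale hα0 (hmax a)
        have h3 := ru_keyA hW hm (le_of_lt ha) (b := cstar)
        have h5 : (0 : ℝ) < cstar - a := by linarith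
        nlinarith [h2, h3, h5]
      have hU : {ω | W ω < cstar} = ⋃ n : ℕ, {ω | W ω ≤ cstar - 1 / ((n : ℝ) + 1)} := by
        ext ω
        simp only [Set.mem_setOf_eq, Set.mem_iUnion]
        constructor
        · intro h
          obtain ⟨n, hn⟩ := exists_nat_one_div_lt (sub_pos.2 h)
          exact ⟨n, by push_cast at hn ⊢; linarith⟩
        · rintro ⟨n, hn⟩
          have : (0 : ℝ) < 1 / ((n : ℝ) + 1) := by positivity
          linarith
      have hmono : Monotone fun n : ℕ => {ω | W ω ≤ cstar - 1 / ((n : ℝ) + 1)} := by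
        intro m n hmn ω hω
        simp only [Set.mem_setOf_eq] at hω ⊢
        have h1 : 1 / ((n : ℝ) + 1) ≤ 1 / ((m : ℝ) + 1) := by
          apply one_div_le_one_div_of_le (by positivity)
          exact_mod_cast add_le_add_left (Nat.cast_le.2 hmn) 1
        linarith
      have hbound : ℙ {ω | W ω < cstar} ≤ ENNReal.ofReal α := by
        rw [hU, hmono.measure_iUnion]
        refine iSup_le fun n => ?_
        have hn : cstar - 1 / ((n : ℝ) + 1) < cstar := by
          have : (0 : ℝ) < 1 / ((n : ℝ) + 1) := by positivity
          linarith
        exact (ENNReal.le_ofReal_iff_toReal_le (hfin _) hα0.le).2 (hle _ hn)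
      exact ENNReal.toReal_le_of_le_ofReal hα0.le hbound
    · -- α ≤ P(W ≤ cstar)
      have hge : ∀ b : ℝ, cstar < b → α ≤ (ℙ {ω | W ω < b}).toReal := by
        intro b hb
        have h2 := ru_scale hα0 (hmax b)
        have h3 := ru_keyB hW hm (le_of_lt hb) (a := cstar)
        have h5 : (0 : ℝ) < b - cstar := by linarith
        nlinarith [h2, h3, h5]
      have hI : {ω | W ω ≤ cstar} = ⋂ n : ℕ, {ω | W ω < cstar + 1 / ((n : ℝ) + 1)} := by
        ext ω
        simp only [Set.mem_setOf_eq, Set.mem_iInter]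
        constructor
        · intro h n
          have : (0 : ℝ) < 1 / ((n : ℝ) + 1) := by positivity
          linarith
        · intro h
          by_contra hc
          push_neg at hc
          obtain ⟨n, hn⟩ := exists_nat_one_div_lt (sub_pos.2 hc)
          have := h n
          push_cast at hn
          linarith
      have hanti : Antitone fun n : ℕ => {ω | W ω < cstar + 1 / ((n : ℝ) + 1)} := by
        intro m n hmn ω hω
        simp only [Set.mem_setOf_eq] at hω ⊢
        have h1 : 1 / ((n : ℝ) + 1) ≤ 1 / ((m : ℝ) + 1) := by
          apply one_div_le_one_div_of_le (by positivity)
          exact_mod_cast add_le_add_left (Nat.cast_le.2 hmn) 1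
        linarith
      have hbound : ENNReal.ofReal α ≤ ℙ {ω | W ω ≤ cstar} := by
        rw [hI, hanti.measure_iInter
          (fun n => (measurableSet_lt hm measurable_const).nullMeasurableSet) ⟨0, hfin _⟩]
        refine le_iInf fun n => ?_
        have hn : cstar < cstar + 1 / ((n : ℝ) + 1) := by
          have : (0 : ℝ) < 1 / ((n : ℝ) + 1) := by positivity
          linarith
        exact ENNReal.ofReal_le_of_le_toReal (hge _ hn)
      calc α = (ENNReal.ofReal α).toReal := (ENNReal.toReal_ofReal hα0.le).symm
        _ ≤ (ℙ {ω | W ω ≤ cstar}).toReal := ENNReal.toReal_mono (hfin _) hbound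
  · rintro ⟨hq1, hq2⟩ c
    rcases le_or_gt c cstar with hc | hc
    · refine ru_scale' hα0 ?_
      have h3 := ru_keyB hW hm hc (b := cstar)
      have hnn : (0 : ℝ) ≤ cstar - c := by linarith
      have hp := mul_le_mul_of_nonneg_left hq1 hnn
      have hcm : (cstar - c) * α = α * (cstar - c) := mul_comm _ _
      linarith
    · refine ru_scale' hα0 ?_
      have h3 := ru_keyA hW hm (le_of_lt hc) (a := cstar)
      have hnp : cstar - c ≤ 0 := by linarith
      have hp := mul_le_mul_of_nonpos_left hq2 hnp
      have hcm : (cstar - c) * α = α * (cstar - c) := mul_comm _ _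
      linarith
  
/-- For an integrable real random variable `W` and level `α ∈ (0,1)`, a point `c*`
maximizes the Rockafellar–Uryasev auxiliary function
`h(c) = c + (1/α)·E[min(W − c, 0)]` over `ℝ` if and only if `c*` is an `α`-quantile
of `W`, i.e. `P(W < c*) ≤ α ≤ P(W ≤ c*)`. -/
theorem rockafellarUryasev_maximizer_iff_quantile
    {Ω : Type*} [MeasureSpace Ω] [IsProbabilityMeasure (ℙ : Measure Ω)]
    (W : Ω → ℝ) (hW : Integrable W) {α : ℝ} (hα : α ∈ Set.Ioo (0 : ℝ) 1)
    (cstar : ℝ) :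
    (∀ c : ℝ,
        c + (1 / α) * ∫ ω, min (W ω - c) 0 ≤
          cstar + (1 / α) * ∫ ω, min (W ω - cstar) 0) ↔
      ((ℙ {ω | W ω < cstar}).toReal ≤ α ∧ α ≤ (ℙ {ω | W ω ≤ cstar}).toReal) := by
  set W' : Ω → ℝ := hW.aestronglyMeasurable.mk W with hW'def
  have hmeas : StronglyMeasurable W' := hW.aestronglyMeasurable.stronglyMeasurable_mk
  have hae : W =ᵐ[ℙ] W' := hW.aestronglyMeasurable.ae_eq_mk
  have hW' : Integrable W' := hW.congr hae
  have hint : ∀ c : ℝ, (∫ ω, min (W ω - c) 0) = ∫ ω, min (W' ω - c) 0 := fun c =>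
    integral_congr_ae (hae.mono fun ω hω => by dsimp only; rw [hω])
  have hlt : ℙ {ω | W ω < cstar} = ℙ {ω | W' ω < cstar} :=
    measure_congr (hae.mono fun ω hω => by
      change (W ω < cstar) = (W' ω < cstar); rw [hω])
  have hle : ℙ {ω | W ω ≤ cstar} = ℙ {ω | W' ω ≤ cstar} :=
    measure_congr (hae.mono fun ω hω => by
      change (W ω ≤ cstar) = (W' ω ≤ cstar); rw [hω])
  simp only [hint, hlt, hle]
  exact ru_aux hW' hmeas.measurable hα cstar
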